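/- Let α be a finitely supported measure on X_1 × ⋯ × X_d that minimizes ∫ c dα' among all finitely supported measures α' with the same marginals as α, for a cost function c. Then the support of α is c-cyclically monotone: for any points (x_1^{(1)},…,x_d^{(1)}),…,(x_1^{(N)},…,x_d^{(N)}) in the support of α and any permutations σ_2,…,σ_d of {1,…,N}, ∑_i c(x_1^{(i)},…,x_d^{(i)}) ≤ ∑_i c(x_1^{(i)}, x_2^{(σ_2(i))},…,x_d^{(σ_d(i))}). -/

import Mathlib

open scoped NNReal

/-- A set `Γ ⊆ X_1 × ⋯ × X_d` is `c`-cyclically monotone if for all `N`, all points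
`p 1, …, p N ∈ Γ` and all permutations `σ_2, …, σ_d` of `{1,…,N}` (the first coordinate
is not permuted), `∑ j, c (p j) ≤ ∑ j, c (p (σ_1 j) 1, …, p (σ_d j) d)`. -/
def IsCycMono {d : ℕ} {X : Fin d → Type*} (c : (∀ i, X i) → ℝ)
    (Γ : Set (∀ i, X i)) : Prop :=
  ∀ (N : ℕ) (p : Fin N → ∀ i, X i), (∀ j, p j ∈ Γ) →
    ∀ σ : Fin d → Equiv.Perm (Fin N), (∀ h : 0 < d, σ ⟨0, h⟩ = 1) →
      ∑ j, c (p j) ≤ ∑ j, c (fun i => p (σ i j) i)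

/-- If a finitely supported (nonnegative) measure `α` on `X_1 × ⋯ × X_d` minimizes
`∫ c dα'` among all finitely supported measures `α'` with the same marginals, then the
support of `α` is `c`-cyclically monotone. -/
theorem stmt15 {d : ℕ} {X : Fin d → Type*} [∀ i, DecidableEq (X i)]
    (c : (∀ i, X i) → ℝ) (α : (∀ i, X i) →₀ ℝ≥0)
    (hopt : ∀ α' : (∀ i, X i) →₀ ℝ≥0,
      (∀ k : Fin d,
        Finsupp.mapDomain (fun p => p k) α' = Finsupp.mapDomain (fun p => p k) α) →
      (α.sum fun p w => (w : ℝ) * c p) ≤ α'.sum fun p w => (w : ℝ) * c p) :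
    IsCycMono c ↑α.support := by
  intro N p hp σ hσ0
  rcases Nat.eq_zero_or_pos N with hN | hN
  · subst hN; simp
  -- cost functional as an additive hom
  classical
  set T : ((∀ i, X i) →₀ ℝ≥0) →+ ℝ :=
    AddMonoidHom.mk' (fun β => β.sum fun p w => (w : ℝ) * c p)
      (fun β γ => Finsupp.sum_add_index' (fun x => by simp)
        (fun x w₁ w₂ => by push_cast; ring)) with hT
  have hTsingle : ∀ (x : ∀ i, X i) (w : ℝ≥0), T (Finsupp.single x w) = (w : ℝ) * c x := by
    intro x w
    simp only [hT, AddMonoidHom.mk'_apply]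
    exact Finsupp.sum_single_index (by simp)
  -- minimum weight
  have hne : (Finset.univ : Finset (Fin N)).Nonempty := ⟨⟨0, hN⟩, Finset.mem_univ _⟩
  set m : ℝ≥0 := Finset.univ.inf' hne fun j => α (p j) with hm
  have hmpos : 0 < m := by
    rw [hm, Finset.lt_inf'_iff]
    intro j _
    have := hp j
    simp only [Finset.coe_sort_coe, Finset.mem_coe, Finsupp.mem_support_iff] at this
    exact pos_iff_ne_zero.mpr this
  set ε : ℝ≥0 := m / N with hε
  have hεpos : 0 < ε := by
    apply div_pos hmpos
    exact_mod_cast hN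
  have hNε : (N : ℝ≥0) * ε = m := by
    rw [hε, mul_div_cancel₀]
    exact_mod_cast hN.ne'
  set q : Fin N → ∀ i, X i := fun j => fun i => p (σ i j) i with hq
  set P : (∀ i, X i) →₀ ℝ≥0 := ∑ j, Finsupp.single (p j) ε with hP
  set Q : (∀ i, X i) →₀ ℝ≥0 := ∑ j, Finsupp.single (q j) ε with hQ
  -- P ≤ α
  have hPle : P ≤ α := by
    rw [Finsupp.le_def]
    intro x
    rw [hP, Finsupp.finset_sum_apply]
    by_cases hx : ∃ j, p j = x
    · obtain ⟨j₀, hj₀⟩ := hx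
      calc ∑ j, (Finsupp.single (p j) ε) x ≤ ∑ _j : Fin N, ε := by
            apply Finset.sum_le_sum
            intro j _
            rw [Finsupp.single_apply]
            split <;> simp
        _ = (N : ℝ≥0) * ε := by simp [mul_comm]
        _ = m := hNε
        _ ≤ α (p j₀) := Finset.inf'_le _ (Finset.mem_univ j₀)
        _ = α x := by rw [hj₀]
    · push_neg at hx
      have : ∀ j ∈ Finset.univ, (Finsupp.single (p j) ε) x = 0 := by
        intro j _
        rw [Finsupp.single_apply_eq_zero]
        intro h; exact absurd h.symm (hx j)
      rw [Finset.sum_eq_zero this]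
      exact zero_le
  have hsplit : α = (α - P) + P := (tsub_add_cancel_of_le hPle).symm
  set α' : (∀ i, X i) →₀ ℝ≥0 := (α - P) + Q with hα'
  -- marginals
  have hmarg : ∀ k : Fin d,
      Finsupp.mapDomain (fun p => p k) α' = Finsupp.mapDomain (fun p => p k) α := by
    intro k
    have hPQ : Finsupp.mapDomain (fun x => x k) Q = Finsupp.mapDomain (fun x => x k) P := by
      rw [hP, hQ, Finsupp.mapDomain_finset_sum, Finsupp.mapDomain_finset_sum]
      simp only [Finsupp.mapDomain_single]
      exact Equiv.sum_comp (σ k) (fun j => Finsupp.single (p j k) ε)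
    conv_rhs => rw [hsplit]
    rw [hα', Finsupp.mapDomain_add, Finsupp.mapDomain_add, hPQ]
  have hle := hopt α' hmarg
  -- rewrite both sides using T
  have hTα : (α.sum fun p w => (w : ℝ) * c p) = T (α - P) + T P := by
    conv_lhs => rw [hsplit]
    exact map_add T _ _
  have hTα' : (α'.sum fun p w => (w : ℝ) * c p) = T (α - P) + T Q := map_add T _ _
  rw [hTα, hTα'] at hle
  have hle2 : T P ≤ T Q := by linarith
  have hTP : T P = ∑ j, (ε : ℝ) * c (p j) := by
    rw [hP, map_sum]; simp [hTsingle]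
  have hTQ : T Q = ∑ j, (ε : ℝ) * c (q j) := by
    rw [hQ, map_sum]; simp [hTsingle]
  rw [hTP, hTQ, ← Finset.mul_sum, ← Finset.mul_sum] at hle2
  have hεR : (0 : ℝ) < ε := by exact_mod_cast hεpos
  have := (mul_le_mul_iff_right₀ hεR).mp hle2
  simpa [hq] using this
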